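/- arXiv:0706.4100 — 2 statements merged into one kernel-verified Lean document; each statement's English description precedes it below -/
import Mathlib

section
/- Let d ≥ 2 and k be positive integers, and let T be a tree on at least k+1 vertices with maximum degree at most d. Then there exists an edge e ∈ E(T) such that at least one of the two trees obtained from T by deleting e has at least k and at most (d−1)(k−1)+1 vertices. -/
open SimpleGraph Set

namespace Stmt8Aux

variable {V : Type*}

lemma mem_comp_iff (G : SimpleGraph V) (u x : V) :
    x ∈ (G.connectedComponentMk u).supp ↔ G.Reachable x u := by
  rw [ConnectedComponent.mem_supp_iff, ConnectedComponent.eq]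

lemma not_reach {T : SimpleGraph V} (hT : T.IsAcyclic) {u w : V} (h : T.Adj u w) :
    ¬ (T.deleteEdges {s(u,w)}).Reachable u w :=
  (isBridge_iff.mp ((isAcyclic_iff_forall_adj_isBridge.mp hT) h))

lemma reach_split (T : SimpleGraph V) {u w x : V} (p : T.Walk x u) :
    (T.deleteEdges {s(u,w)}).Reachable x u ∨ (T.deleteEdges {s(u,w)}).Reachable x w := by
  induction p with
  | nil => exact Or.inl (Reachable.refl _)
  | @cons a b c h q ih =>
    by_cases he : s(a, b) = s(c, w)
    · rw [Sym2.eq_iff] at he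
      rcases he with ⟨rfl, rfl⟩ | ⟨rfl, rfl⟩
      · exact Or.inl (Reachable.refl _)
      · exact Or.inr (Reachable.refl _)
    · have hadj : (T.deleteEdges {s(c,w)}).Adj a b := by
        rw [deleteEdges_adj]; exact ⟨h, by simpa using he⟩
      exact ih.imp hadj.reachable.trans hadj.reachable.trans

lemma reach_avoid {G : SimpleGraph V} {e e' : Sym2 V} {u x y : V} (hu' : u ∈ e')
    (p : (G.deleteEdges {e}).Walk x y) (hu : u ∉ p.support) :
    (G.deleteEdges {e'}).Reachable x y := by
  induction p with
  | nil => exact Reachable.refl _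
  | @cons a b c h q ih =>
    rw [Walk.support_cons] at hu
    have ha : u ≠ a := fun h' => hu (by simp [h'])
    have hq : u ∉ q.support := fun h' => hu (List.mem_cons_of_mem _ h')
    have hb : u ≠ b := fun h' => hq (h' ▸ q.start_mem_support)
    have hadj : (G.deleteEdges {e'}).Adj a b := by
      rw [deleteEdges_adj]
      refine ⟨(deleteEdges_adj.mp h).1, ?_⟩
      intro hc
      rw [Set.mem_singleton_iff] at hc
      rw [← hc, Sym2.mem_iff] at hu'
      rcases hu' with h' | h'
      · exact ha h'
      · exact hb h'
    exact hadj.reachable.trans (ih hq)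

lemma supp_union {T : SimpleGraph V} (hT : T.Connected) {u w : V} :
    ((T.deleteEdges {s(u,w)}).connectedComponentMk u).supp ∪
      ((T.deleteEdges {s(u,w)}).connectedComponentMk w).supp = Set.univ := by
  ext x
  simp only [Set.mem_union, mem_comp_iff, Set.mem_univ, iff_true]
  obtain ⟨p⟩ := hT x u
  exact reach_split T p

lemma supp_disjoint {T : SimpleGraph V} (hT : T.IsAcyclic) {u w : V} (h : T.Adj u w) :
    Disjoint ((T.deleteEdges {s(u,w)}).connectedComponentMk u).supp
      ((T.deleteEdges {s(u,w)}).connectedComponentMk w).supp := by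
  rw [Set.disjoint_left]
  intro x hx hx'
  rw [mem_comp_iff] at hx hx'
  exact not_reach hT h (hx.symm.trans hx')

lemma card_sum {T : SimpleGraph V} [Fintype V] (hT : T.IsTree) {u w : V} (h : T.Adj u w) :
    ((T.deleteEdges {s(u,w)}).connectedComponentMk u).supp.ncard +
      ((T.deleteEdges {s(u,w)}).connectedComponentMk w).supp.ncard = Fintype.card V := by
  rw [← Set.ncard_union_eq (supp_disjoint hT.IsAcyclic h) (Set.toFinite _) (Set.toFinite _),
    supp_union hT.isConnected, Set.ncard_univ, Nat.card_eq_fintype_card]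

lemma comp_subset {T : SimpleGraph V} (hT : T.IsAcyclic) {u w v : V}
    (huw : T.Adj u w) (huv : T.Adj u v) (hvw : v ≠ w) :
    ((T.deleteEdges {s(v,u)}).connectedComponentMk v).supp ⊆
      ((T.deleteEdges {s(u,w)}).connectedComponentMk u).supp \ {u} := by
  classical
  intro x hx
  rw [mem_comp_iff] at hx
  obtain ⟨p⟩ := hx
  have hu : u ∉ p.support := by
    intro hmem
    exact not_reach hT huv.symm ⟨(p.dropUntil u hmem).reverse⟩
  have hx' : (T.deleteEdges {s(u,w)}).Reachable x v :=
    reach_avoid (e := s(v,u)) (Sym2.mem_mk_left u w) p hu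
  have hvu : (T.deleteEdges {s(u,w)}).Adj v u := by
    rw [deleteEdges_adj]
    refine ⟨huv.symm, ?_⟩
    intro hc
    rw [Set.mem_singleton_iff, Sym2.eq_iff] at hc
    rcases hc with ⟨rfl, rfl⟩ | ⟨h1, h2⟩
    · exact huw.ne rfl
    · exact hvw h1
  refine ⟨(mem_comp_iff _ _ _).mpr (hx'.trans hvu.reachable), ?_⟩
  intro hxu
  rw [Set.mem_singleton_iff] at hxu
  exact hu (hxu ▸ p.start_mem_support)

lemma comp_cover {T : SimpleGraph V} {u w : V} :
    ((T.deleteEdges {s(u,w)}).connectedComponentMk u).supp ⊆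
      {u} ∪ ⋃ v ∈ (T.neighborSet u \ {w}),
        ((T.deleteEdges {s(v,u)}).connectedComponentMk v).supp := by
  classical
  intro x hx
  rw [mem_comp_iff] at hx
  obtain ⟨p0⟩ := hx.symm
  obtain ⟨p, hp⟩ : ∃ p : (T.deleteEdges {s(u,w)}).Walk u x, p.IsPath :=
    ⟨p0.bypass, p0.bypass_isPath⟩
  cases p with
  | nil => exact Or.inl rfl
  | @cons _ b _ h q =>
    rw [Walk.cons_isPath_iff] at hp
    have hadj : T.Adj u b ∧ s(u, b) ∉ ({s(u,w)} : Set (Sym2 V)) := deleteEdges_adj.mp h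
    have hbw : b ≠ w := by
      rintro rfl
      exact hadj.2 rfl
    have hreach : (T.deleteEdges {s(b,u)}).Reachable b x :=
      reach_avoid (e := s(u,w)) (Sym2.mem_mk_right b u) q hp.2
    refine Or.inr ?_
    rw [Set.mem_iUnion₂]
    exact ⟨b, ⟨hadj.1, hbw⟩, (mem_comp_iff _ _ _).mpr hreach.symm⟩

lemma ncard_biUnion_le {α β : Type*} (s : Finset α) (f : α → Set β) :
    (⋃ a ∈ s, f a).ncard ≤ ∑ a ∈ s, (f a).ncard := by
  classical
  induction s using Finset.induction with
  | empty => simp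
  | @insert b s hbs ih =>
    rw [Finset.sum_insert hbs, Finset.set_biUnion_insert]
    exact le_trans (Set.ncard_union_le _ _) (Nat.add_le_add_left ih _)

end Stmt8Aux

open Stmt8Aux in
/-- **Proposition 4.2.** Let `d ≥ 2` and `k ≥ 1` be integers, and let `T` be a
tree on at least `k+1` vertices with maximum degree at most `d`. Then there is
an edge `e = (u,w)` of `T` such that one of the two trees obtained from `T` by
deleting `e` (namely, the component of `u`) has at least `k` and at most
`(d-1)(k-1)+1` vertices. -/
theorem stmt_8 (d k : ℕ) (hd : 2 ≤ d) (hk : 1 ≤ k) {V : Type*} [Fintype V]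
    (T : SimpleGraph V) (hT : T.IsTree) (hcard : k + 1 ≤ Fintype.card V)
    (hdeg : ∀ v, (T.neighborSet v).ncard ≤ d) :
    ∃ u w, T.Adj u w ∧
      k ≤ ((T.deleteEdges {s(u, w)}).connectedComponentMk u).supp.ncard ∧
      ((T.deleteEdges {s(u, w)}).connectedComponentMk u).supp.ncard ≤
        (d - 1) * (k - 1) + 1 := by
  classical
  set S : Set ℕ := {n | ∃ u w, T.Adj u w ∧
    ((T.deleteEdges {s(u, w)}).connectedComponentMk u).supp.ncard = n ∧ k ≤ n} with hS
  have hne : S.Nonempty := by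
    have hdeg1 : ∃ w, T.degree w = 1 := by
      by_contra hcon
      push_neg at hcon
      have h2 : ∀ w : V, 2 ≤ T.degree w := by
        intro w
        have hpos : 0 < T.degree w := by
          rw [T.degree_pos_iff_exists_adj w]
          have hx : ∃ x : V, x ≠ w := by
            by_contra hx
            push_neg at hx
            have : Fintype.card V ≤ 1 :=
              Fintype.card_le_one_iff.mpr fun a b => (hx a).trans (hx b).symm
            omega
          obtain ⟨x, hx⟩ := hx
          obtain ⟨p⟩ := hT.isConnected w x
          cases p with
          | nil => exact absurd rfl hx.symm
          | cons h q => exact ⟨_, h⟩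
        have := hcon w
        omega
      have hsum : 2 * Fintype.card V ≤ ∑ v, T.degree v := by
        calc 2 * Fintype.card V = ∑ _v : V, 2 := by
              rw [Finset.sum_const, Finset.card_univ]; ring
          _ ≤ ∑ v, T.degree v := Finset.sum_le_sum (fun v _ => h2 v)
      rw [T.sum_degrees_eq_twice_card_edges] at hsum
      have := hT.card_edgeFinset
      omega
    obtain ⟨w, hw1⟩ := hdeg1
    have hw1' : (T.neighborFinset w).card = 1 := hw1
    obtain ⟨u, hu⟩ := Finset.card_eq_one.mp hw1'
    have huw : T.Adj w u := by
      have : u ∈ T.neighborFinset w := by rw [hu]; exact Finset.mem_singleton_self u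
      rwa [T.mem_neighborFinset] at this
    have hsupp : ((T.deleteEdges {s(u,w)}).connectedComponentMk w).supp = {w} := by
      apply Set.eq_singleton_iff_unique_mem.mpr
      refine ⟨(mem_comp_iff _ _ _).mpr (Reachable.refl _), ?_⟩
      intro x hx
      rw [mem_comp_iff] at hx
      obtain ⟨p⟩ := hx.symm
      cases p with
      | nil => rfl
      | @cons _ b _ h q =>
        exfalso
        have hadj := deleteEdges_adj.mp h
        have hb : b ∈ T.neighborFinset w := (T.mem_neighborFinset w b).mpr hadj.1
        rw [hu, Finset.mem_singleton] at hb
        subst hb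
        exact hadj.2 (by rw [Set.mem_singleton_iff, Sym2.eq_swap])
    have hcs := card_sum hT huw.symm
    rw [hsupp, Set.ncard_singleton] at hcs
    exact ⟨((T.deleteEdges {s(u, w)}).connectedComponentMk u).supp.ncard,
      u, w, huw.symm, rfl, by omega⟩
  obtain ⟨u, w, huw, hfn, hkn⟩ := Nat.sInf_mem hne
  refine ⟨u, w, huw, by omega, ?_⟩
  -- components of other neighbors of u are small
  have hsmall : ∀ v, T.Adj u v → v ≠ w →
      ((T.deleteEdges {s(v,u)}).connectedComponentMk v).supp.ncard ≤ k - 1 := by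
    intro v hvadj hvw
    have hsub := comp_subset hT.IsAcyclic huw hvadj hvw
    have h1 : ((T.deleteEdges {s(v,u)}).connectedComponentMk v).supp.ncard ≤
        (((T.deleteEdges {s(u,w)}).connectedComponentMk u).supp \ {u}).ncard :=
      Set.ncard_le_ncard hsub (Set.toFinite _)
    have h2 : (((T.deleteEdges {s(u,w)}).connectedComponentMk u).supp \ {u}).ncard =
        ((T.deleteEdges {s(u,w)}).connectedComponentMk u).supp.ncard - 1 :=
      Set.ncard_diff_singleton_of_mem ((mem_comp_iff _ _ _).mpr (Reachable.refl _))
    have h3 : 0 < ((T.deleteEdges {s(u,w)}).connectedComponentMk u).supp.ncard := by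
      rw [Set.ncard_pos (Set.toFinite _)]
      exact ⟨u, (mem_comp_iff _ _ _).mpr (Reachable.refl _)⟩
    by_contra hcon
    push_neg at hcon
    have hmemS : ((T.deleteEdges {s(v,u)}).connectedComponentMk v).supp.ncard ∈ S :=
      ⟨v, u, hvadj.symm, rfl, by omega⟩
    have := Nat.sInf_le hmemS
    omega
  set N : Set V := T.neighborSet u \ {w} with hN
  set F : Finset V := N.toFinset with hF
  have hFcard : F.card ≤ d - 1 := by
    have hNcard : N.ncard = (T.neighborSet u).ncard - 1 := by
      rw [hN]
      exact Set.ncard_diff_singleton_of_mem huw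
    have : N.ncard = F.card := Set.ncard_eq_toFinset_card' N
    have := hdeg u
    omega
  have hUeq : (⋃ v ∈ N, ((T.deleteEdges {s(v,u)}).connectedComponentMk v).supp) =
      ⋃ v ∈ F, ((T.deleteEdges {s(v,u)}).connectedComponentMk v).supp := by
    ext x
    simp [hF, Set.mem_toFinset]
  have hbound : ((T.deleteEdges {s(u,w)}).connectedComponentMk u).supp.ncard ≤
      1 + ∑ v ∈ F, ((T.deleteEdges {s(v,u)}).connectedComponentMk v).supp.ncard := by
    calc ((T.deleteEdges {s(u,w)}).connectedComponentMk u).supp.ncard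
        ≤ ({u} ∪ ⋃ v ∈ N, ((T.deleteEdges {s(v,u)}).connectedComponentMk v).supp).ncard :=
          Set.ncard_le_ncard comp_cover (Set.toFinite _)
      _ ≤ ({u} : Set V).ncard +
          (⋃ v ∈ N, ((T.deleteEdges {s(v,u)}).connectedComponentMk v).supp).ncard :=
          Set.ncard_union_le _ _
      _ ≤ 1 + ∑ v ∈ F, ((T.deleteEdges {s(v,u)}).connectedComponentMk v).supp.ncard := by
          rw [Set.ncard_singleton, hUeq]
          exact Nat.add_le_add_left (ncard_biUnion_le _ _) 1
  have hsum2 : ∑ v ∈ F, ((T.deleteEdges {s(v,u)}).connectedComponentMk v).supp.ncard ≤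
      F.card * (k - 1) := by
    have := Finset.sum_le_card_nsmul F
      (fun v => ((T.deleteEdges {s(v,u)}).connectedComponentMk v).supp.ncard) (k - 1)
      (fun v hv => by
        have hvN : v ∈ N := by rwa [hF, Set.mem_toFinset] at hv
        exact hsmall v hvN.1 (by simpa using hvN.2))
    simpa using this
  have hmul : F.card * (k - 1) ≤ (d - 1) * (k - 1) :=
    Nat.mul_le_mul_right _ hFcard
  omega
end

section
/- Let K be a positive integer and δ, Δ real numbers satisfying K Δ² e^{−δ/(8K) + 1} < 1. Let H = (V,E) be a graph in which every vertex v satisfies δ ≤ d(v) ≤ Δ. Then H contains K pairwise disjoint sets of vertices S₁, S₂, …, S_K such that every vertex of H has at least δ/(2K) neighbors in each set S_i. -/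
open Finset

section LLLcount
variable {V α : Type*} [Fintype V] [DecidableEq V] [Fintype α] [DecidableEq α]

private def mrg (s : Finset V) (c d : V → α) : V → α := fun x => if x ∈ s then c x else d x

private lemma mrg_on (s : Finset V) (c d : V → α) : ∀ x ∈ s, mrg s c d x = c x := by
  intro x hx; simp [mrg, hx]

private lemma mrg_off (s : Finset V) (c d : V → α) : ∀ x ∉ s, mrg s c d x = d x := by
  intro x hx; simp [mrg, hx]

private lemma indep_count (s : Finset V) (A B : Finset (V → α))
    (hA : ∀ c d : V → α, (∀ x ∈ s, c x = d x) → (c ∈ A ↔ d ∈ A))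
    (hB : ∀ c d : V → α, (∀ x ∉ s, c x = d x) → (c ∈ B ↔ d ∈ B)) :
    (A ∩ B).card * Fintype.card (V → α) = A.card * B.card := by
  have key : ((A ∩ B) ×ˢ (univ : Finset (V → α))).card = (A ×ˢ B).card := by
    apply Finset.card_nbij' (fun p => (mrg s p.1 p.2, mrg s p.2 p.1))
      (fun p => (mrg s p.1 p.2, mrg s p.2 p.1))
    · rintro ⟨c, d⟩ hp
      simp only [mem_coe, mem_product, mem_inter, mem_univ, and_true] at hp
      refine mem_product.2 ⟨?_, ?_⟩
      · exact (hA c (mrg s c d) (fun x hx => (mrg_on s c d x hx).symm)).mp hp.1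
      · exact (hB c (mrg s d c) (fun x hx => (mrg_off s d c x hx).symm)).mp hp.2
    · rintro ⟨a, b⟩ hp
      rw [mem_coe, mem_product] at hp
      refine mem_product.2 ⟨mem_inter.2 ⟨?_, ?_⟩, mem_univ _⟩
      · exact (hA (mrg s a b) a (mrg_on s a b)).mpr hp.1
      · exact (hB (mrg s a b) b (mrg_off s a b)).mpr hp.2
    · rintro ⟨c, d⟩ _
      refine Prod.ext ?_ ?_ <;> dsimp <;> funext x <;> by_cases hx : x ∈ s <;> simp [mrg, hx]
    · rintro ⟨a, b⟩ _
      refine Prod.ext ?_ ?_ <;> dsimp <;> funext x <;> by_cases hx : x ∈ s <;> simp [mrg, hx]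
  simpa [Finset.card_product, Finset.card_univ] using key

private lemma sum_prod_eq (s : Finset V) (g : α → ℝ) :
    ∑ c : V → α, ∏ u ∈ s, g (c u)
      = (∑ j, g j) ^ s.card * (Fintype.card α : ℝ) ^ (Fintype.card V - s.card) := by
  have h1 : ∀ c : V → α, ∏ u ∈ s, g (c u) = ∏ u : V, (if u ∈ s then g (c u) else 1) := by
    intro c
    rw [← Finset.prod_filter]
    congr 1
    simp [Finset.filter_mem_eq_inter]
  simp_rw [h1]
  have h2 : ∑ c : V → α, ∏ u : V, (if u ∈ s then g (c u) else 1)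
      = ∏ u : V, ∑ j : α, (if u ∈ s then g j else 1) := by
    rw [Finset.prod_univ_sum]
    rw [← Fintype.piFinset_univ]
  rw [h2]
  have h3 : ∀ u : V, (∑ j : α, (if u ∈ s then g j else 1))
      = if u ∈ s then (∑ j, g j) else (Fintype.card α : ℝ) := by
    intro u; by_cases hu : u ∈ s <;> simp [hu, Finset.card_univ]
  simp_rw [h3]
  rw [Finset.prod_ite, Finset.prod_const, Finset.prod_const]
  have c1 : (univ.filter (fun x => x ∈ s)).card = s.card := by
    congr 1; simp [Finset.filter_mem_eq_inter]
  have c2 : (univ.filter (fun x => x ∉ s)).card = Fintype.card V - s.card := by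
    rw [Finset.filter_not, Finset.card_sdiff_of_subset (by simp [Finset.filter_mem_eq_inter])]
    rw [c1, Finset.card_univ]
  rw [c1, c2]

private lemma chernoff_count (s : Finset V) (i : α) (t : ℝ) :
    (((univ : Finset (V → α)).filter fun c =>
        (((s.filter fun u => c u = i).card : ℝ) < t)).card : ℝ)
      ≤ Real.exp (Real.log 2 * t) * ((Fintype.card α : ℝ) - 1/2) ^ s.card
          * (Fintype.card α : ℝ) ^ (Fintype.card V - s.card) := by
  classical
  set X : (V → α) → ℕ := fun c => (s.filter fun u => c u = i).card with hX
  have key : ∀ c : V → α, Real.exp (-Real.log 2 * X c)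
      = ∏ u ∈ s, (if c u = i then Real.exp (-Real.log 2) else 1) := by
    intro c
    rw [Finset.prod_ite, Finset.prod_const, Finset.prod_const, one_pow, mul_one]
    rw [← Real.exp_nat_mul]
    congr 1
    simp only [hX]
    ring
  have hsum : ∑ j : α, (if j = i then Real.exp (-Real.log 2) else 1)
      = (Fintype.card α : ℝ) - 1/2 := by
    have hsplit : ∀ j : α, (if j = i then Real.exp (-Real.log 2) else 1)
        = 1 + (if j = i then Real.exp (-Real.log 2) - 1 else 0) := by
      intro j; split <;> ring
    simp_rw [hsplit]
    rw [Finset.sum_add_distrib, Finset.sum_ite_eq' univ i]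
    simp [Finset.card_univ, Real.exp_neg, Real.exp_log (by norm_num : (0:ℝ) < 2)]
    ring
  set F := (univ : Finset (V → α)).filter fun c => ((X c : ℝ) < t) with hF
  calc (F.card : ℝ) = ∑ _c ∈ F, (1:ℝ) := by simp
    _ ≤ ∑ c ∈ F, Real.exp (Real.log 2 * (t - X c)) := by
        apply Finset.sum_le_sum
        intro c hc
        have hct : (X c : ℝ) < t := (Finset.mem_filter.mp hc).2
        have : 0 ≤ Real.log 2 * (t - X c) :=
          mul_nonneg (Real.log_nonneg one_le_two) (by linarith)
        exact Real.one_le_exp this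
    _ ≤ ∑ c : V → α, Real.exp (Real.log 2 * (t - X c)) :=
        Finset.sum_le_sum_of_subset_of_nonneg (Finset.subset_univ F)
          (fun _ _ _ => (Real.exp_pos _).le)
    _ = Real.exp (Real.log 2 * t) * ∑ c : V → α, Real.exp (-Real.log 2 * X c) := by
        rw [Finset.mul_sum]
        apply Finset.sum_congr rfl
        intro c _
        rw [← Real.exp_add]
        congr 1
        ring
    _ = Real.exp (Real.log 2 * t) * (((Fintype.card α : ℝ) - 1/2) ^ s.card
          * (Fintype.card α : ℝ) ^ (Fintype.card V - s.card)) := by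
        congr 1
        simp_rw [key]
        rw [sum_prod_eq s (fun j => if j = i then Real.exp (-Real.log 2) else 1), hsum]
    _ = _ := by ring

variable {ι : Type*} [DecidableEq ι]

open Classical in
private noncomputable def avoid (A : ι → Finset (V → α)) (S : Finset ι) : Finset (V → α) :=
  univ.filter fun c => ∀ k ∈ S, c ∉ A k

open Classical in
private lemma avoid_insert (A : ι → Finset (V → α)) (S : Finset ι) (j : ι) :
    avoid A (insert j S) = avoid A S \ A j := by
  ext c; simp only [avoid, mem_filter, mem_univ, true_and, mem_sdiff, mem_insert]
  constructor
  · intro h; exact ⟨fun k hk => h k (Or.inr hk), h j (Or.inl rfl)⟩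
  · rintro ⟨h1, h2⟩ k hk; rcases hk with rfl | hk; exact h2; exact h1 k hk

private lemma card_avoid_insert (A : ι → Finset (V → α)) (S : Finset ι) (j : ι) :
    ((avoid A (insert j S)).card : ℝ)
      = (avoid A S).card - ((A j ∩ avoid A S).card : ℝ) := by
  rw [avoid_insert, Finset.inter_comm]
  have h := Finset.card_sdiff_add_card_inter (avoid A S) (A j)
  have h2 := congrArg (Nat.cast : ℕ → ℝ) h
  push_cast at h2
  linarith

private lemma avoid_subset (A : ι → Finset (V → α)) {S T : Finset ι} (hST : S ⊆ T) :
    avoid A T ⊆ avoid A S := by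
  classical
  intro c hc
  simp only [avoid, mem_filter, mem_univ, true_and] at hc ⊢
  exact fun k hk => hc k (hST hk)

private theorem lll_main [Nonempty α] (A : ι → Finset (V → α)) (vbl : ι → Finset V)
    (hdet : ∀ k, ∀ c d : V → α, (∀ x ∈ vbl k, c x = d x) → (c ∈ A k ↔ d ∈ A k))
    (Γ : ι → Finset ι)
    (hΓ : ∀ k l, l ∉ Γ k → l ≠ k → Disjoint (vbl k) (vbl l))
    (x : ℝ) (hx0 : 0 < x) (hx1 : x < 1)
    (hp : ∀ k, ((A k).card : ℝ) ≤ x * (1-x)^((Γ k).card) * Fintype.card (V → α)) :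
    ∀ n (S : Finset ι), S.card ≤ n →
      (∀ k, (((A k) ∩ avoid A S).card : ℝ) ≤ x * (avoid A S).card) ∧
      ((1-x)^S.card * ((Fintype.card (V → α) : ℝ)) ≤ (avoid A S).card) := by
  classical
  have hΩpos : (0:ℝ) < Fintype.card (V → α) := by
    have := Fintype.card_pos (α := V → α); positivity
  have h1x0 : (0:ℝ) < 1 - x := by linarith
  intro n
  induction n with
  | zero =>
    intro S hS
    rw [Finset.card_eq_zero.mp (Nat.le_zero.mp hS)]
    have havoid : avoid A (∅ : Finset ι) = univ := by
      simp [avoid]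
    rw [havoid]
    constructor
    · intro k
      calc ((A k ∩ univ).card : ℝ) = (A k).card := by rw [Finset.inter_univ]
        _ ≤ x * (1-x)^((Γ k).card) * Fintype.card (V → α) := hp k
        _ ≤ x * 1 * Fintype.card (V → α) := by
            have h4 : (1-x)^((Γ k).card) ≤ 1 := pow_le_one₀ (le_of_lt h1x0) (by linarith)
            have := mul_le_mul_of_nonneg_left h4 (le_of_lt hx0)
            nlinarith
        _ = x * (univ : Finset (V → α)).card := by rw [mul_one, Finset.card_univ]
    · simp [Finset.card_univ]
  | succ n IH =>
    intro S hS
    by_cases hcard : S.card ≤ n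
    · exact IH S hcard
    have hScard : S.card = n + 1 := le_antisymm hS (Nat.lt_of_not_le hcard)
    have part1 : ∀ k, (((A k) ∩ avoid A S).card : ℝ) ≤ x * (avoid A S).card := by
      intro k
      set S1 := S ∩ Γ k with hS1
      set S2 := S \ Γ k with hS2
      by_cases hk2 : k ∈ S2
      · have : A k ∩ avoid A S = ∅ := by
          ext c; simp only [mem_inter, Finset.notMem_empty, iff_false, avoid,
            mem_filter, mem_univ, true_and, not_and]
          intro hc hav
          exact (hav k (Finset.mem_sdiff.mp hk2).1 hc)
        rw [this]
        simp only [Finset.card_empty, Nat.cast_zero]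
        positivity
      have hindep : ((A k ∩ avoid A S2).card : ℝ) * Fintype.card (V → α)
          = (A k).card * (avoid A S2).card := by
        have := indep_count (vbl k) (A k) (avoid A S2) (hdet k) ?_
        · exact_mod_cast this
        · intro c d hcd
          simp only [avoid, mem_filter, mem_univ, true_and]
          constructor <;> intro hc l hl
          · intro hdl
            have hdisj : Disjoint (vbl k) (vbl l) := by
              apply hΓ k l (Finset.mem_sdiff.mp hl).2
              rintro rfl; exact hk2 hl
            have : d ∈ A l ↔ c ∈ A l := by
              apply hdet l
              intro y hy
              exact (hcd y (fun hyk => (Finset.disjoint_left.mp hdisj hyk) hy)).symm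
            exact hc l hl (this.mp hdl)
          · intro hdl
            have hdisj : Disjoint (vbl k) (vbl l) := by
              apply hΓ k l (Finset.mem_sdiff.mp hl).2
              rintro rfl; exact hk2 hl
            have : c ∈ A l ↔ d ∈ A l := by
              apply hdet l
              intro y hy
              exact (hcd y (fun hyk => (Finset.disjoint_left.mp hdisj hyk) hy))
            exact hc l hl (this.mp hdl)
      have hnum2 : ((A k ∩ avoid A S2).card : ℝ)
          ≤ x * (1-x)^((Γ k).card) * (avoid A S2).card := by
        have h2 := hp k
        have hA2nn : (0:ℝ) ≤ ((avoid A S2).card : ℝ) := by positivity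
        nlinarith [hindep]
      have hpeel : ∀ T : Finset ι, T ⊆ S1 →
          (1-x)^T.card * ((avoid A S2).card : ℝ) ≤ (avoid A (S2 ∪ T)).card := by
        intro T
        induction T using Finset.induction_on with
        | empty => intro _; simp
        | @insert a T ha hT =>
          intro hsub
          have hTsub : T ⊆ S1 := (Finset.subset_insert a T).trans hsub
          have haS1 : a ∈ S1 := hsub (Finset.mem_insert_self a T)
          have hUsub : S2 ∪ T ⊆ S.erase a := by
            intro b hb
            rcases Finset.mem_union.mp hb with hb | hb
            · refine Finset.mem_erase.2 ⟨?_, (Finset.mem_sdiff.mp hb).1⟩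
              rintro rfl
              exact (Finset.mem_sdiff.mp hb).2 (Finset.mem_inter.mp haS1).2
            · refine Finset.mem_erase.2 ⟨?_, (Finset.mem_inter.mp (hTsub hb)).1⟩
              rintro rfl; exact ha hb
          have hUcard : (S2 ∪ T).card ≤ n := by
            calc (S2 ∪ T).card ≤ (S.erase a).card := Finset.card_le_card hUsub
              _ = S.card - 1 := Finset.card_erase_of_mem (Finset.mem_inter.mp haS1).1
              _ ≤ n := by omega
          have IH1 := (IH (S2 ∪ T) hUcard).1 a
          have : S2 ∪ insert a T = insert a (S2 ∪ T) := by
            ext b; simp only [Finset.mem_union, Finset.mem_insert]; tauto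
          rw [this, card_avoid_insert]
          have hTc := hT hTsub
          rw [Finset.card_insert_of_notMem ha, pow_succ]
          nlinarith [hTc, mul_le_mul_of_nonneg_left hTc (le_of_lt h1x0), IH1]
      have hfinal := hpeel S1 (Finset.Subset.refl S1)
      have hSeq : S2 ∪ S1 = S := by
        ext b
        simp only [hS1, hS2, Finset.mem_union, Finset.mem_sdiff, Finset.mem_inter]
        tauto
      rw [hSeq] at hfinal
      have hmono : (A k ∩ avoid A S).card ≤ (A k ∩ avoid A S2).card := by
        apply Finset.card_le_card
        exact Finset.inter_subset_inter (le_refl _) (avoid_subset A (Finset.sdiff_subset))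
      have hS1Γ : S1.card ≤ (Γ k).card := Finset.card_le_card (Finset.inter_subset_right)
      have hpow : (1-x)^((Γ k).card) ≤ (1-x)^S1.card :=
        pow_le_pow_of_le_one (le_of_lt h1x0) (by linarith) hS1Γ
      calc ((A k ∩ avoid A S).card : ℝ) ≤ (A k ∩ avoid A S2).card := by exact_mod_cast hmono
        _ ≤ x * (1-x)^((Γ k).card) * (avoid A S2).card := hnum2
        _ ≤ x * ((1-x)^S1.card * (avoid A S2).card) := by
            have hA2nn : (0:ℝ) ≤ ((avoid A S2).card : ℝ) := by positivity
            rw [mul_assoc]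
            apply mul_le_mul_of_nonneg_left _ (le_of_lt hx0)
            exact mul_le_mul_of_nonneg_right hpow hA2nn
        _ ≤ x * (avoid A S).card := mul_le_mul_of_nonneg_left hfinal (le_of_lt hx0)
    refine ⟨part1, ?_⟩
    obtain ⟨j, hj⟩ := Finset.card_pos.mp (by omega : 0 < S.card)
    have hSj : S = insert j (S.erase j) := (Finset.insert_erase hj).symm
    have hej : (S.erase j).card = n := by
      rw [Finset.card_erase_of_mem hj, hScard]
      omega
    have IH2 := IH (S.erase j) (le_of_eq hej)
    have hnum := IH2.1 j
    have hlow := IH2.2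
    rw [hej] at hlow
    have key : ((avoid A S).card : ℝ)
        = (avoid A (S.erase j)).card - ((A j ∩ avoid A (S.erase j)).card : ℝ) := by
      conv_lhs => rw [hSj]
      exact card_avoid_insert A (S.erase j) j
    rw [hScard, key, pow_succ]
    nlinarith [hlow, hnum, mul_le_mul_of_nonneg_left hlow (le_of_lt h1x0)]

private theorem lll_exists [Nonempty α] [Fintype ι] (A : ι → Finset (V → α))
    (vbl : ι → Finset V)
    (hdet : ∀ k, ∀ c d : V → α, (∀ x ∈ vbl k, c x = d x) → (c ∈ A k ↔ d ∈ A k))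
    (Γ : ι → Finset ι)
    (hΓ : ∀ k l, l ∉ Γ k → l ≠ k → Disjoint (vbl k) (vbl l))
    (x : ℝ) (hx0 : 0 < x) (hx1 : x < 1)
    (hp : ∀ k, ((A k).card : ℝ) ≤ x * (1-x)^((Γ k).card) * Fintype.card (V → α)) :
    ∃ c : V → α, ∀ k, c ∉ A k := by
  classical
  have h := (lll_main A vbl hdet Γ hΓ x hx0 hx1 hp (univ : Finset ι).card univ le_rfl).2
  have hΩpos : (0:ℝ) < Fintype.card (V → α) := by
    have := Fintype.card_pos (α := V → α); positivity
  have h1x0 : (0:ℝ) < 1 - x := by linarith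
  have hpos : 0 < ((avoid A univ).card : ℝ) := lt_of_lt_of_le (by positivity) h
  obtain ⟨c, hc⟩ := Finset.card_pos.mp (by exact_mod_cast hpos)
  refine ⟨c, fun k => ?_⟩
  have hc' : ∀ l ∈ (univ : Finset ι), c ∉ A l := by
    have hmem : c ∈ avoid A univ := hc
    simpa [avoid] using hmem
  exact hc' k (Finset.mem_univ k)

end LLLcount

private lemma pow_ge_exp_neg_one {y : ℝ} (hy : 2 ≤ y) (D : ℕ) (hD : (D:ℝ) ≤ y - 1) :
    Real.exp (-1) ≤ (1 - 1/y) ^ D := by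
  have hy0 : (0:ℝ) < y := by linarith
  have hy1 : (0:ℝ) < y - 1 := by linarith
  have hb0 : (0:ℝ) < 1 - 1/y := by
    rw [sub_pos]; rw [div_lt_one hy0]; linarith
  have hb1 : 1 - 1/y ≤ 1 := by
    have : 0 < 1/y := by positivity
    linarith
  have step1 : Real.exp (-(1/(y-1))) ≤ 1 - 1/y := by
    have h1 := Real.add_one_le_exp (1/(y-1))
    have hyy : 1 - 1/y = (1 + 1/(y-1))⁻¹ := by
      field_simp
      ring
    rw [hyy, Real.exp_neg]
    apply inv_anti₀ (by positivity)
    linarith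
  calc Real.exp (-1) = Real.exp (-(1/(y-1))) ^ (y-1) := by
        rw [← Real.exp_mul]; congr 1; field_simp
    _ ≤ (1 - 1/y) ^ (y - 1) :=
        Real.rpow_le_rpow (Real.exp_pos _).le step1 (by linarith)
    _ ≤ (1 - 1/y) ^ ((D:ℝ)) :=
        Real.rpow_le_rpow_of_exponent_ge hb0 hb1 hD
    _ = (1 - 1/y) ^ D := Real.rpow_natCast _ D

set_option maxHeartbeats 1000000 in
/-- **Lemma 4.4 (splitting vertex degrees).** Let `K` be a positive integer and
`δ, Δ` reals with `K Δ² e^{-δ/(8K) + 1} < 1`. Let `H` be a graph in which every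
vertex `v` satisfies `δ ≤ d(v) ≤ Δ`. Then `H` contains `K` pairwise disjoint
vertex sets `S₁, …, S_K` such that every vertex of `H` has at least `δ/(2K)`
neighbors in each `S_i`. -/
theorem stmt_10 (K : ℕ) (hK : 0 < K) (δ Δ : ℝ)
    (h : (K : ℝ) * Δ^2 * Real.exp (-δ/(8*K) + 1) < 1)
    {V : Type*} [Fintype V] (H : SimpleGraph V)
    (hdeg : ∀ v, δ ≤ ((H.neighborSet v).ncard : ℝ) ∧ ((H.neighborSet v).ncard : ℝ) ≤ Δ) :
    ∃ S : Fin K → Set V,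
      (∀ i j, i ≠ j → Disjoint (S i) (S j)) ∧
      ∀ (v : V) (i : Fin K), δ / (2*K) ≤ ((H.neighborSet v ∩ S i).ncard : ℝ) := by
  classical
  have hK1 : (1:ℝ) ≤ K := by exact_mod_cast hK
  by_cases hδ : δ ≤ 0
  · refine ⟨fun _ => ∅, fun i j _ => by simp, ?_⟩
    intro v i
    have h1 : δ / (2*(K:ℝ)) ≤ 0 := by
      apply div_nonpos_of_nonpos_of_nonneg hδ
      positivity
    have h2 : (0:ℝ) ≤ ((H.neighborSet v ∩ ∅).ncard : ℝ) := by positivity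
    exact h1.trans h2
  push_neg at hδ
  rcases Nat.lt_or_ge K 2 with hK2 | hK2
  · -- K = 1
    have hKeq : K = 1 := by omega
    subst hKeq
    refine ⟨fun _ => Set.univ, fun i j hij => absurd (Subsingleton.elim i j) hij, ?_⟩
    intro v i
    rw [Set.inter_univ]
    have h1 := (hdeg v).1
    push_cast
    linarith
  -- now 2 ≤ K
  by_cases hV : IsEmpty V
  · exact ⟨fun _ => ∅, fun i j _ => by simp, fun v => (hV.false v).elim⟩
  have hVne : Nonempty V := not_isEmpty_iff.mp hV
  haveI : Nonempty (Fin K) := ⟨⟨0, hK⟩⟩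
  set nbr : V → Finset V := fun v => (H.neighborSet v).toFinset with hnbr
  have hcardnbr : ∀ v, ((nbr v).card : ℝ) = ((H.neighborSet v).ncard : ℝ) := by
    intro v
    rw [Set.ncard_eq_toFinset_card']
  have hdeg' : ∀ v, δ ≤ ((nbr v).card : ℝ) ∧ ((nbr v).card : ℝ) ≤ Δ := by
    intro v; rw [hcardnbr]; exact hdeg v
  have hnbrne : ∀ v, 0 < (nbr v).card := by
    intro v
    have h1 := (hdeg' v).1
    by_contra hc
    push_neg at hc
    have h0 : (nbr v).card = 0 := by omega
    rw [h0] at h1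
    norm_num at h1
    linarith
  have hΔ1 : (1:ℝ) ≤ Δ := by
    obtain ⟨v0⟩ := hVne
    have h1 : (1:ℝ) ≤ ((nbr v0).card : ℝ) := by exact_mod_cast hnbrne v0
    linarith [(hdeg' v0).2]
  set y : ℝ := (K:ℝ) * Δ^2 with hy
  have hK2' : (2:ℝ) ≤ K := by exact_mod_cast hK2
  have hy2 : 2 ≤ y := by nlinarith
  have hy0 : 0 < y := by linarith
  set x : ℝ := 1/y with hx
  have hx0 : 0 < x := by positivity
  have hx1 : x < 1 := by
    rw [hx, div_lt_one hy0]; linarith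
  set t : ℝ := δ / (2*(K:ℝ)) with ht
  have htpos : 0 < t := by positivity
  set A : V × Fin K → Finset (V → Fin K) := fun p =>
    (univ : Finset (V → Fin K)).filter fun c =>
      ((((nbr p.1).filter fun u => c u = p.2).card : ℝ) < t) with hA
  set vbl : V × Fin K → Finset V := fun p => nbr p.1 with hvbl
  set Γ : V × Fin K → Finset (V × Fin K) := fun p =>
    (univ : Finset (V × Fin K)).filter fun q =>
      q ≠ p ∧ ¬ Disjoint (nbr p.1) (nbr q.1) with hΓdef
  have hdet : ∀ p, ∀ c d : V → Fin K,
      (∀ u ∈ vbl p, c u = d u) → (c ∈ A p ↔ d ∈ A p) := by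
    intro p c d hcd
    have hfeq : (nbr p.1).filter (fun u => c u = p.2)
        = (nbr p.1).filter (fun u => d u = p.2) := by
      apply Finset.filter_congr
      intro u hu
      rw [hcd u hu]
    simp only [hA, Finset.mem_filter, Finset.mem_univ, true_and, hfeq]
  have hΓ : ∀ p q, q ∉ Γ p → q ≠ p → Disjoint (vbl p) (vbl q) := by
    intro p q hq hne
    by_contra hdis
    exact hq (Finset.mem_filter.mpr ⟨Finset.mem_univ _, hne, hdis⟩)
  have hΓcard : ∀ p : V × Fin K, ((Γ p).card : ℝ) ≤ y - 1 := by
    rintro ⟨v, i⟩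
    set W : Finset V := (univ : Finset V).filter
      (fun w => ¬ Disjoint (nbr v) (nbr w)) with hW
    have hWsub : W ⊆ (nbr v).biUnion nbr := by
      intro w hw
      have hw2 := (Finset.mem_filter.mp hw).2
      obtain ⟨u, hu1, hu2⟩ := Finset.not_disjoint_iff.mp hw2
      refine Finset.mem_biUnion.mpr ⟨u, hu1, ?_⟩
      simp only [hnbr, Set.mem_toFinset, SimpleGraph.mem_neighborSet] at hu2 ⊢
      exact H.adj_symm hu2
    have hWcard : ((W.card):ℝ) ≤ Δ^2 := by
      have hΔ0 : (0:ℝ) ≤ Δ := by linarith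
      calc (W.card:ℝ) ≤ (((nbr v).biUnion nbr).card : ℝ) := by
            exact_mod_cast Finset.card_le_card hWsub
        _ ≤ ((∑ u ∈ nbr v, (nbr u).card : ℕ) : ℝ) := by
            exact_mod_cast Finset.card_biUnion_le
        _ = ∑ u ∈ nbr v, ((nbr u).card : ℝ) := by push_cast; rfl
        _ ≤ ∑ u ∈ nbr v, Δ := Finset.sum_le_sum (fun u _ => (hdeg' u).2)
        _ = ((nbr v).card : ℝ) * Δ := by rw [Finset.sum_const, nsmul_eq_mul]
        _ ≤ Δ * Δ := mul_le_mul_of_nonneg_right (hdeg' v).2 hΔ0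
        _ = Δ^2 := (sq Δ).symm
    have hsub : Γ (v,i) ⊆ (W ×ˢ (univ : Finset (Fin K))).erase (v,i) := by
      intro q hq
      obtain ⟨hne, hd⟩ := (Finset.mem_filter.mp hq).2
      refine Finset.mem_erase.mpr ⟨hne, Finset.mem_product.mpr ⟨?_, Finset.mem_univ _⟩⟩
      exact Finset.mem_filter.mpr ⟨Finset.mem_univ _, hd⟩
    have hvW : (v, i) ∈ W ×ˢ (univ : Finset (Fin K)) := by
      refine Finset.mem_product.mpr ⟨Finset.mem_filter.mpr ⟨Finset.mem_univ _, ?_⟩,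
        Finset.mem_univ _⟩
      obtain ⟨u, hu⟩ := Finset.card_pos.mp (hnbrne v)
      exact Finset.not_disjoint_iff.mpr ⟨u, hu, hu⟩
    have hprodpos : 0 < (W ×ˢ (univ : Finset (Fin K))).card :=
      Finset.card_pos.mpr ⟨_, hvW⟩
    calc ((Γ (v,i)).card : ℝ)
        ≤ (((W ×ˢ (univ : Finset (Fin K))).erase (v,i)).card : ℝ) := by
          exact_mod_cast Finset.card_le_card hsub
      _ = ((W ×ˢ (univ : Finset (Fin K))).card : ℝ) - 1 := by
          rw [Finset.card_erase_of_mem hvW]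
          rw [Nat.cast_sub (by omega)]
          norm_num
      _ = (W.card : ℝ) * K - 1 := by
          rw [Finset.card_product, Finset.card_univ, Fintype.card_fin]
          push_cast
          ring
      _ ≤ y - 1 := by
          have hK0 : (0:ℝ) ≤ K := by positivity
          rw [hy]
          nlinarith
  have hΩcard : (Fintype.card (V → Fin K) : ℝ)
      = ((K:ℝ)) ^ (Fintype.card V) := by
    rw [Fintype.card_fun, Fintype.card_fin]
    push_cast
    rfl
  have hΩpos : (0:ℝ) < Fintype.card (V → Fin K) := by
    have := Fintype.card_pos (α := V → Fin K); positivity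
  have hlog2 : Real.log 2 ≤ 3/4 := by
    have := Real.log_two_lt_d9
    linarith
  have hp : ∀ p, ((A p).card : ℝ)
      ≤ x * (1-x)^((Γ p).card) * Fintype.card (V → Fin K) := by
    rintro ⟨v, i⟩
    have hcher := chernoff_count (α := Fin K) (nbr v) i t
    rw [Fintype.card_fin] at hcher
    have hAc : ((A (v, i)).card : ℝ)
        ≤ Real.exp (Real.log 2 * t) * ((K:ℝ) - 1/2) ^ (nbr v).card
          * (K:ℝ) ^ (Fintype.card V - (nbr v).card) := hcher
    set d : ℕ := (nbr v).card with hd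
    set n : ℕ := Fintype.card V with hn
    have hdn : d ≤ n := by
      rw [hd, hn, ← Finset.card_univ]
      exact Finset.card_le_card (Finset.subset_univ _)
    have hKpos : (0:ℝ) < K := by linarith
    have hstep1 : ((K:ℝ) - 1/2) ^ d = (K:ℝ)^d * (1 - 1/(2*(K:ℝ)))^d := by
      rw [← mul_pow]
      congr 1
      field_simp
    have hδd : δ ≤ (d:ℝ) := (hdeg' v).1
    have hb0 : (0:ℝ) ≤ 1 - 1/(2*(K:ℝ)) := by
      rw [sub_nonneg, div_le_one (by linarith)]
      linarith
    have hstep2 : (1 - 1/(2*(K:ℝ)))^d ≤ Real.exp (-((d:ℝ)/(2*K))) := by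
      have h1 : (1 - 1/(2*(K:ℝ))) ≤ Real.exp (-(1/(2*(K:ℝ)))) := by
        have := Real.add_one_le_exp (-(1/(2*(K:ℝ))))
        linarith
      calc (1 - 1/(2*(K:ℝ)))^d ≤ (Real.exp (-(1/(2*(K:ℝ)))))^d :=
            pow_le_pow_left₀ hb0 h1 d
        _ = Real.exp (-((d:ℝ)/(2*K))) := by
            rw [← Real.exp_nat_mul]
            congr 1
            ring
    have hsum3 : Real.log 2 * t + (-((d:ℝ)/(2*(K:ℝ)))) ≤ -δ/(8*(K:ℝ)) := by
      have e1 : -((d:ℝ)/(2*(K:ℝ))) ≤ -t := by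
        rw [ht, neg_le_neg_iff, div_le_div_iff₀ (by linarith) (by linarith)]
        nlinarith
      have e2 : -δ/(8*(K:ℝ)) = -(t/4) := by
        rw [ht]
        ring
      rw [e2]
      have e3 : Real.log 2 * t ≤ (3/4) * t :=
        mul_le_mul_of_nonneg_right hlog2 htpos.le
      linarith
    have hstep3 : Real.exp (Real.log 2 * t) * Real.exp (-((d:ℝ)/(2*(K:ℝ))))
        ≤ Real.exp (-δ/(8*(K:ℝ))) := by
      rw [← Real.exp_add]
      exact Real.exp_le_exp.mpr hsum3
    have hexp : Real.exp (-δ/(8*(K:ℝ))) ≤ x * Real.exp (-1) := by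
      have hE : y * (Real.exp (-δ/(8*(K:ℝ))) * Real.exp 1) < 1 := by
        have he : Real.exp (-δ/(8*(K:ℝ))) * Real.exp 1
            = Real.exp (-δ/(8*(K:ℝ)) + 1) := by rw [← Real.exp_add]
        rw [he]
        exact h
      have h1 : x * Real.exp (-1) = 1 / (y * Real.exp 1) := by
        rw [hx, Real.exp_neg, one_div, one_div, mul_inv y (Real.exp 1)]
      rw [h1, le_div_iff₀ (by positivity)]
      nlinarith [Real.exp_pos (1:ℝ), Real.exp_pos (-δ/(8*(K:ℝ)))]
    have hpow : Real.exp (-1) ≤ (1-x)^((Γ (v,i)).card) := by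
      have hpg := pow_ge_exp_neg_one hy2 ((Γ (v,i)).card) (hΓcard (v,i))
      rw [hx]
      exact hpg
    have hKn : (K:ℝ)^d * (K:ℝ)^(n - d) = (K:ℝ)^n := by
      rw [← pow_add]
      congr 1
      omega
    have hexpnn : (0:ℝ) ≤ Real.exp (Real.log 2 * t) := (Real.exp_pos _).le
    have hKnd : (0:ℝ) ≤ (K:ℝ)^(n-d) := by positivity
    have hKn0 : (0:ℝ) < (K:ℝ)^n := by positivity
    calc ((A (v, i)).card : ℝ)
        ≤ Real.exp (Real.log 2 * t) * ((K:ℝ) - 1/2) ^ d * (K:ℝ) ^ (n - d) := hAc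
      _ = Real.exp (Real.log 2 * t) * (1 - 1/(2*(K:ℝ)))^d * ((K:ℝ)^d * (K:ℝ)^(n-d)) := by
          rw [hstep1]; ring
      _ = Real.exp (Real.log 2 * t) * (1 - 1/(2*(K:ℝ)))^d * (K:ℝ)^n := by rw [hKn]
      _ ≤ Real.exp (Real.log 2 * t) * Real.exp (-((d:ℝ)/(2*(K:ℝ)))) * (K:ℝ)^n := by
          have := mul_le_mul_of_nonneg_left hstep2 hexpnn
          exact mul_le_mul_of_nonneg_right this hKn0.le
      _ ≤ Real.exp (-δ/(8*(K:ℝ))) * (K:ℝ)^n :=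
          mul_le_mul_of_nonneg_right hstep3 hKn0.le
      _ ≤ (x * Real.exp (-1)) * (K:ℝ)^n :=
          mul_le_mul_of_nonneg_right hexp hKn0.le
      _ ≤ (x * (1-x)^((Γ (v,i)).card)) * (K:ℝ)^n := by
          apply mul_le_mul_of_nonneg_right _ hKn0.le
          exact mul_le_mul_of_nonneg_left hpow hx0.le
      _ = x * (1-x)^((Γ (v,i)).card) * Fintype.card (V → Fin K) := by
          rw [hΩcard, hn]
  obtain ⟨c, hc⟩ := lll_exists A vbl hdet Γ hΓ x hx0 hx1 hp
  refine ⟨fun i => {v | c v = i}, ?_, ?_⟩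
  · intro i j hij
    rw [Set.disjoint_left]
    rintro v hv1 hv2
    exact hij (hv1 ▸ hv2 ▸ rfl)
  · intro v i
    have hcv := hc (v, i)
    simp only [hA, Finset.mem_filter, Finset.mem_univ, true_and, not_lt] at hcv
    have hset : H.neighborSet v ∩ {u | c u = i}
        = ↑((nbr v).filter fun u => c u = i) := by
      ext u
      simp [hnbr, Set.mem_toFinset]
    rw [hset, Set.ncard_coe_finset]
    exact hcv
end
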